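/- Let α ∈ ℝ and let w : [0, ∞) → ℝ be continuous with w(0) = 0. Suppose u, v : [0, ∞) → ℝ are continuous and satisfy the integral equations u(t) = u(0) + ∫₀ᵗ (α·u(s) − u(s)³) ds + w(t) and v(t) = v(0) + ∫₀ᵗ (α·v(s) − v(s)³) ds + w(t) for all t ≥ 0. Then |u(t) − v(t)| ≤ e^{α t}·|u(0) − v(0)| for all t ≥ 0. (In particular, for α < 0 any two solutions of the pathwise stochastic differential equation dx = (αx − x³)dt + σ dW_t driven by the same noise path converge together uniformly exponentially at rate α.) -/

import Mathlib

open MeasureTheory intervalIntegral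

/-- Two solutions of the pathwise integral equation
`x(t) = x(0) + ∫₀ᵗ (α x(s) − x(s)³) ds + w(t)` driven by the same continuous noise path `w`
satisfy `|u(t) − v(t)| ≤ e^{αt} |u(0) − v(0)|` for all `t ≥ 0`. -/
theorem pathwise_contraction_of_additive_noise_cubic
    (α : ℝ) (w u v : ℝ → ℝ)
    (hw_cont : ContinuousOn w (Set.Ici 0)) (hw_zero : w 0 = 0)
    (hu_cont : ContinuousOn u (Set.Ici 0))
    (hv_cont : ContinuousOn v (Set.Ici 0))
    (hu_eq : ∀ t ≥ (0:ℝ), u t = u 0 + (∫ s in (0:ℝ)..t, (α * u s - u s ^ 3)) + w t)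
    (hv_eq : ∀ t ≥ (0:ℝ), v t = v 0 + (∫ s in (0:ℝ)..t, (α * v s - v s ^ 3)) + w t) :
    ∀ t ≥ (0:ℝ), |u t - v t| ≤ Real.exp (α * t) * |u 0 - v 0| := by
  set Fu : ℝ → ℝ := fun s => α * u s - u s ^ 3 with hFu
  set Fv : ℝ → ℝ := fun s => α * v s - v s ^ 3 with hFv
  set F : ℝ → ℝ := fun s => Fu s - Fv s with hF
  have hFu_cont : ContinuousOn Fu (Set.Ici 0) :=
    (continuousOn_const.mul hu_cont).sub (hu_cont.pow 3)
  have hFv_cont : ContinuousOn Fv (Set.Ici 0) :=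
    (continuousOn_const.mul hv_cont).sub (hv_cont.pow 3)
  have hF_cont : ContinuousOn F (Set.Ici 0) := hFu_cont.sub hFv_cont
  set d : ℝ → ℝ := fun t => u t - v t with hd
  have hd_cont : ContinuousOn d (Set.Ici 0) := hu_cont.sub hv_cont
  -- integrability
  have hFu_int : ∀ t ≥ (0:ℝ), IntervalIntegrable Fu MeasureTheory.volume 0 t := fun t ht =>
    (hFu_cont.mono (by rw [Set.uIcc_of_le ht]; exact Set.Icc_subset_Ici_self)).intervalIntegrable
  have hFv_int : ∀ t ≥ (0:ℝ), IntervalIntegrable Fv MeasureTheory.volume 0 t := fun t ht =>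
    (hFv_cont.mono (by rw [Set.uIcc_of_le ht]; exact Set.Icc_subset_Ici_self)).intervalIntegrable
  have hF_int : ∀ t ≥ (0:ℝ), IntervalIntegrable F MeasureTheory.volume 0 t := fun t ht =>
    (hFu_int t ht).sub (hFv_int t ht)
  have hd_eq : ∀ t ≥ (0:ℝ), d t = d 0 + ∫ s in (0:ℝ)..t, F s := by
    intro t ht
    have := hu_eq t ht
    have := hv_eq t ht
    have hsub : (∫ s in (0:ℝ)..t, F s) =
        (∫ s in (0:ℝ)..t, Fu s) - ∫ s in (0:ℝ)..t, Fv s :=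
      intervalIntegral.integral_sub (hFu_int t ht) (hFv_int t ht)
    simp only [hd]
    rw [hu_eq t ht, hv_eq t ht, hsub]; ring
  -- derivative of d on Ioi 0
  have hd_deriv : ∀ t > (0:ℝ), HasDerivAt d (F t) t := by
    intro t ht
    have hmem : Set.Ici (0:ℝ) ∈ nhds t := Ici_mem_nhds ht
    have hcont : ContinuousAt F t := (hF_cont t ht.le).continuousAt hmem
    have hmeas : StronglyMeasurableAtFilter F (nhds t) MeasureTheory.volume :=
      ContinuousOn.stronglyMeasurableAtFilter isOpen_Ioi
        (hF_cont.mono Set.Ioi_subset_Ici_self) t ht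
    have h1 : HasDerivAt (fun x => ∫ s in (0:ℝ)..x, F s) (F t) t :=
      intervalIntegral.integral_hasDerivAt_right (hF_int t ht.le) hmeas hcont
    have h2 : HasDerivAt (fun x => d 0 + ∫ s in (0:ℝ)..x, F s) (F t) t :=
      h1.const_add _
    refine h2.congr_of_eventuallyEq ?_
    filter_upwards [hmem] with x hx
    exact hd_eq x hx
  -- g = e^{-αt} d t, h = g^2
  set g : ℝ → ℝ := fun t => Real.exp (-α * t) * d t with hg
  have hg_deriv : ∀ t > (0:ℝ), HasDerivAt g (Real.exp (-α * t) * (F t - α * d t)) t := by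
    intro t ht
    have he : HasDerivAt (fun x => Real.exp (-α * x)) (-α * Real.exp (-α * t)) t := by
      have := ((hasDerivAt_id t).const_mul (-α)).exp
      simpa [mul_comm] using this
    have : HasDerivAt g _ t := he.mul (hd_deriv t ht)
    convert this using 1
    ring
  set h : ℝ → ℝ := fun t => g t ^ 2 with hh
  have hh_deriv : ∀ t > (0:ℝ), HasDerivAt h
      (2 * g t * (Real.exp (-α * t) * (F t - α * d t))) t := by
    intro t ht
    have : HasDerivAt h _ t := (hg_deriv t ht).pow 2
    simpa [mul_comm, mul_assoc] using this
  have hkey : ∀ t > (0:ℝ), 2 * g t * (Real.exp (-α * t) * (F t - α * d t)) ≤ 0 := by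
    intro t ht
    have hFd : F t - α * d t = -(u t ^ 3 - v t ^ 3) := by
      simp only [hF, hFu, hFv, hd]; ring
    have hsign : d t * (u t ^ 3 - v t ^ 3) ≥ 0 := by
      have hfac : u t ^ 3 - v t ^ 3 = (u t - v t) * (u t ^ 2 + u t * v t + v t ^ 2) := by ring
      have hpos : 0 ≤ u t ^ 2 + u t * v t + v t ^ 2 := by nlinarith [sq_nonneg (u t + v t)]
      rw [hfac, hd]
      have := mul_nonneg (mul_self_nonneg (u t - v t)) hpos
      calc (0:ℝ) ≤ ((u t - v t) * (u t - v t)) * (u t ^ 2 + u t * v t + v t ^ 2) := this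
        _ = (u t - v t) * ((u t - v t) * (u t ^ 2 + u t * v t + v t ^ 2)) := by ring
    have he : (0:ℝ) < Real.exp (-α * t) := Real.exp_pos _
    rw [hFd]
    have : 2 * g t * (Real.exp (-α * t) * -(u t ^ 3 - v t ^ 3)) =
        -(2 * Real.exp (-α * t) ^ 2 * (d t * (u t ^ 3 - v t ^ 3))) := by
      simp only [hg]; ring
    rw [this]
    have h2 : 0 ≤ 2 * Real.exp (-α * t) ^ 2 * (d t * (u t ^ 3 - v t ^ 3)) := by positivity
    linarith
  have hh_cont : ContinuousOn h (Set.Ici 0) :=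
    (((Real.continuous_exp.comp (continuous_const.mul continuous_id)).continuousOn).mul
      hd_cont).pow 2
  have hanti : AntitoneOn h (Set.Ici 0) := by
    apply antitoneOn_of_deriv_nonpos (convex_Ici 0) hh_cont
    · intro t ht
      rw [interior_Ici] at ht
      exact ((hh_deriv t ht).differentiableAt).differentiableWithinAt
    · intro t ht
      rw [interior_Ici] at ht
      rw [(hh_deriv t ht).deriv]
      exact hkey t ht
  intro t ht
  have hle : h t ≤ h 0 := hanti (Set.self_mem_Ici) ht ht
  have hg0 : g 0 = d 0 := by simp [hg]
  have habs : |g t| ≤ |d 0| := by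
    have h1 : Real.sqrt (g t ^ 2) ≤ Real.sqrt (d 0 ^ 2) := by
      apply Real.sqrt_le_sqrt
      simpa [hh, hg0] using hle
    simpa [Real.sqrt_sq_eq_abs] using h1
  have hdt : d t = Real.exp (α * t) * g t := by
    simp only [hg]
    rw [← mul_assoc, ← Real.exp_add]
    simp
  calc |u t - v t| = |d t| := rfl
    _ = Real.exp (α * t) * |g t| := by
        rw [hdt, abs_mul, abs_of_pos (Real.exp_pos _)]
    _ ≤ Real.exp (α * t) * |d 0| := by
        exact mul_le_mul_of_nonneg_left habs (Real.exp_pos _).le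
    _ = Real.exp (α * t) * |u 0 - v 0| := rfl
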